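/- Let φ(x) = log(1+e^x). For all real numbers C, D, Z, the matrix identity X_D · L · X_C = X_{D-φ(-Z)} · L · X_{-Z} · L · X_{C+φ(Z)} holds, where X_Y = [[0,-e^{Y/2}],[e^{-Y/2},0]] and L = [[0,1],[-1,-1]]. -/

import Mathlib

open Matrix

noncomputable def edgeX (Y : ℝ) : Matrix (Fin 2) (Fin 2) ℝ :=
  !![0, -Real.exp (Y/2); Real.exp (-Y/2), 0]

def Lturn : Matrix (Fin 2) (Fin 2) ℝ := !![0, 1; -1, -1]

noncomputable def phi (x : ℝ) : ℝ := Real.log (1 + Real.exp x)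

lemma phi_eq (Z : ℝ) : phi Z = Z + phi (-Z) := by
  have h : (1 : ℝ) + Real.exp Z = Real.exp Z * (1 + Real.exp (-Z)) := by
    rw [mul_add, mul_one, ← Real.exp_add]
    simp [add_comm]
  have hp : (0:ℝ) < 1 + Real.exp (-Z) := by positivity
  rw [phi, phi, h, Real.log_mul (Real.exp_ne_zero Z) (ne_of_gt hp), Real.log_exp]

theorem flip_identity_L (C D Z : ℝ) :
    edgeX D * Lturn * edgeX C
      = edgeX (D - phi (-Z)) * Lturn * edgeX (-Z) * Lturn * edgeX (C + phi Z) := by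
  set m := Real.exp (-(phi (-Z)) / 2) with hm
  have hA : m ^ 2 * (1 + Real.exp (-Z)) = 1 := by
    rw [hm, sq, ← Real.exp_add, show -phi (-Z) / 2 + -phi (-Z) / 2 = -phi (-Z) by ring,
      phi, Real.exp_neg, Real.exp_log (by positivity), inv_mul_cancel₀ (by positivity)]
  have hB : Real.exp (Z / 2) * Real.exp (-Z / 2) = 1 := by
    rw [← Real.exp_add, show Z / 2 + -Z / 2 = (0:ℝ) by ring, Real.exp_zero]
  have hC : Real.exp (-Z / 2) * Real.exp (-Z / 2) = Real.exp (-Z) := by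
    simp only [← Real.exp_add]; rw [Real.exp_eq_exp]; ring
  have e1 : Real.exp ((D - phi (-Z)) / 2) = Real.exp (D / 2) * m := by
    rw [hm]; simp only [← Real.exp_add]; rw [Real.exp_eq_exp]; ring
  have e2 : Real.exp ((-phi (-Z) + -Z + -C) / 2) = m * Real.exp (-Z / 2) * Real.exp (-C / 2) := by
    rw [hm]; simp only [← Real.exp_add]; rw [Real.exp_eq_exp]; ring
  have e3 : Real.exp ((C + (Z + phi (-Z))) / 2) = Real.exp (C / 2) * Real.exp (Z / 2) / m := by
    rw [hm, eq_div_iff (Real.exp_ne_zero _)]; simp only [← Real.exp_add]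
    rw [Real.exp_eq_exp]; ring
  have e4 : Real.exp ((phi (-Z) - D) / 2) = Real.exp (-D / 2) / m := by
    rw [hm, eq_div_iff (Real.exp_ne_zero _)]; simp only [← Real.exp_add]
    rw [Real.exp_eq_exp]; ring
  have hm0 : m ≠ 0 := Real.exp_ne_zero _
  rw [phi_eq Z]
  ext i j
  fin_cases i <;> fin_cases j <;>
    simp [edgeX, Lturn, Matrix.mul_apply, Fin.sum_univ_succ] <;>
    simp only [e1, e2, e3, e4]
  · linear_combination (-(Real.exp (D/2)*Real.exp (-C/2)))*hA
      - (Real.exp (D/2)*Real.exp (-C/2)*m^2)*hB - (Real.exp (D/2)*Real.exp (-C/2)*m^2)*hC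
  · field_simp
    rw [← neg_div]
    linear_combination (-1)*hB
  · field_simp
    rw [← neg_div]
    linear_combination (-1)*hB
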